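/- There exists a test: a set E ⊆ ⋃_{q∈ω} 2^q × 2^q satisfying: (a) for each q ∈ ω there is a unique (s_q,t_q) ∈ E ∩ (2^q × 2^q); (b) for all m,p ∈ ω and u ∈ 2^{<ω} there is v ∈ 2^{<ω} with (s_p0uv, t_p1uv) ∈ E and (|t_p1uv|-1)₀ = m; (c) for each n > 0 there exist q < n and w ∈ 2^{<ω} with s_n = s_q0w and t_n = t_q1w. -/

import Mathlib

def tri (m : ℕ) : ℕ := ∑ k ∈ Finset.range (m + 1), k
noncomputable def Mfn (q : ℕ) : ℕ := Nat.findGreatest (fun m => tri m ≤ q) q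
/-- The first component `(q)₀` of the inverse of the pairing `⟨n,p⟩ = tri (n+p) + p`. -/
noncomputable def fst0 (q : ℕ) : ℕ := Mfn q + tri (Mfn q) - q

/-- A test: `e q = (s_q, t_q)` enumerates `E`, with the conditions (a), (b), (c). -/
noncomputable def IsTest (e : ℕ → List Bool × List Bool) : Prop :=
  (∀ q, (e q).1.length = q ∧ (e q).2.length = q) ∧
  (∀ q q', (e q').1.length = (e q).1.length → e q' = e q) ∧
  (∀ m p : ℕ, ∀ u : List Bool, ∃ v : List Bool, ∃ q : ℕ,
    e q = ((e p).1 ++ false :: (u ++ v), (e p).2 ++ true :: (u ++ v)) ∧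
    fst0 (((e p).2 ++ true :: (u ++ v)).length - 1) = m) ∧
  (∀ n > 0, ∃ q < n, ∃ w : List Bool,
    (e n).1 = (e q).1 ++ false :: w ∧ (e n).2 = (e q).2 ++ true :: w)

/-! ### Auxiliary development -/

theorem tri_succ (m : ℕ) : tri (m + 1) = tri m + (m + 1) := by
  simp [tri, Finset.sum_range_succ]

theorem le_tri (m : ℕ) : m ≤ tri m := by
  induction m with
  | zero => simp [tri]
  | succ n ih => rw [tri_succ]; omega

theorem tri_mono {m n : ℕ} (h : m ≤ n) : tri m ≤ tri n := by
  induction n with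
  | zero => exact Nat.le_zero.mp h ▸ le_rfl
  | succ k ih =>
    rcases Nat.lt_or_ge m (k+1) with h' | h'
    · have := ih (by omega); rw [tri_succ]; omega
    · have hm : m = k + 1 := by omega
      exact hm ▸ le_rfl

/-- The triangle pairing. -/
def pr (n p : ℕ) : ℕ := tri (n + p) + p

theorem self_le_pr_left (n p : ℕ) : n + p ≤ pr n p := by
  have := le_tri (n + p); simp [pr]; omega

theorem tri_Mfn_le (q : ℕ) : tri (Mfn q) ≤ q := by
  unfold Mfn
  exact Nat.findGreatest_spec (P := fun m => tri m ≤ q) (m := 0) (Nat.zero_le q) (show tri 0 ≤ q by simp [tri])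

theorem Mfn_le (q : ℕ) : Mfn q ≤ q := Nat.findGreatest_le q

theorem Mfn_pr (n p : ℕ) : Mfn (pr n p) = n + p := by
  have hle : n + p ≤ pr n p := self_le_pr_left n p
  apply le_antisymm
  · by_contra h
    push_neg at h
    have h1 : tri (Mfn (pr n p)) ≤ pr n p := tri_Mfn_le _
    have h2 : tri (n + p + 1) ≤ tri (Mfn (pr n p)) := tri_mono (by omega)
    rw [tri_succ] at h2
    simp [pr] at h1 h2
    omega
  · exact Nat.le_findGreatest hle (by simp [pr])

theorem fst0_pr (n p : ℕ) : fst0 (pr n p) = n := by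
  unfold fst0
  rw [Mfn_pr]
  simp only [pr]
  omega

/-- The second component of the inverse pairing. -/
noncomputable def snd0 (q : ℕ) : ℕ := q - tri (Mfn q)

theorem snd0_pr (n p : ℕ) : snd0 (pr n p) = p := by
  unfold snd0
  rw [Mfn_pr]
  simp only [pr]
  omega

theorem snd0_le (q : ℕ) : snd0 q ≤ q := Nat.sub_le _ _

theorem fst0_le (q : ℕ) : fst0 q ≤ q := by
  have h1 := tri_Mfn_le q
  have h2 := Mfn_le q
  simp only [fst0]; omega

theorem fst0_add_snd0_le (q : ℕ) : fst0 q + snd0 q ≤ q := by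
  have h1 := tri_Mfn_le q
  have h2 := Mfn_le q
  simp only [fst0, snd0]; omega

/-- Bijective-binary encoding of words. -/
def enc : List Bool → ℕ
  | [] => 0
  | b :: l => 2 * enc l + b.toNat + 1

/-- Decoding of words. -/
def dec : ℕ → List Bool
  | 0 => []
  | n + 1 => (decide (n % 2 = 1)) :: dec (n / 2)
decreasing_by exact Nat.lt_succ_of_le (Nat.div_le_self n 2)

theorem dec_enc (l : List Bool) : dec (enc l) = l := by
  induction l with
  | nil => simp [enc, dec]
  | cons b l ih =>
    cases b
    · have h : enc (false :: l) = (2 * enc l) + 1 := rfl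
      have h2 : (2 * enc l) % 2 = 0 := by omega
      have h3 : (2 * enc l) / 2 = enc l := by omega
      rw [h, dec, h2, h3, ih]
      simp
    · have h : enc (true :: l) = (2 * enc l + 1) + 1 := rfl
      have h2 : (2 * enc l + 1) % 2 = 1 := by omega
      have h3 : (2 * enc l + 1) / 2 = enc l := by omega
      rw [h, dec, h2, h3, ih]
      simp

theorem length_dec_le (n : ℕ) : (dec n).length ≤ n := by
  induction n using Nat.strong_induction_on with
  | _ n ih =>
    match n with
    | 0 => simp [dec]
    | n + 1 =>
      rw [dec]
      have h := ih (n / 2) (Nat.lt_succ_of_le (Nat.div_le_self n 2))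
      have : n / 2 ≤ n := Nat.div_le_self n 2
      simp only [List.length_cons]
      omega

theorem length_le_enc (l : List Bool) : l.length ≤ enc l := by
  induction l with
  | nil => simp
  | cons b l ih => simp [enc]; omega

/-- index of the prefix used at stage `q+1` -/
noncomputable def aOf (q : ℕ) : ℕ := fst0 (snd0 q)
/-- word inserted at stage `q+1` -/
noncomputable def uOf (q : ℕ) : List Bool := dec (snd0 (snd0 q))
/-- full suffix at stage `q+1` -/
noncomputable def wOf (q : ℕ) : List Bool :=
  uOf q ++ List.replicate (q - aOf q - (uOf q).length) false

theorem aOf_le (q : ℕ) : aOf q ≤ q := le_trans (fst0_le _) (snd0_le _)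

theorem aOf_add_len_le (q : ℕ) : aOf q + (uOf q).length ≤ q := by
  have h1 := length_dec_le (snd0 (snd0 q))
  have h2 := fst0_add_snd0_le (snd0 q)
  have h3 := snd0_le q
  simp only [aOf, uOf]
  omega

theorem length_wOf (q : ℕ) : (wOf q).length = q - aOf q := by
  have := aOf_add_len_le q
  simp only [wOf, List.length_append, List.length_replicate]
  omega

/-- The test. -/
noncomputable def eT : ℕ → List Bool × List Bool
  | 0 => ([], [])
  | q + 1 => ((eT (aOf q)).1 ++ false :: wOf q, (eT (aOf q)).2 ++ true :: wOf q)
decreasing_by all_goals exact Nat.lt_succ_of_le (aOf_le _)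

theorem eT_len (q : ℕ) : (eT q).1.length = q ∧ (eT q).2.length = q := by
  induction q using Nat.strong_induction_on with
  | _ q ih =>
    match q with
    | 0 => simp [eT]
    | q + 1 =>
      have ha := ih (aOf q) (Nat.lt_succ_of_le (aOf_le q))
      have hw := length_wOf q
      have hle := aOf_le q
      rw [eT]
      simp only [List.length_append, List.length_cons, ha.1, ha.2, hw]
      omega

theorem exists_test : ∃ e : ℕ → List Bool × List Bool, IsTest e := by
  refine ⟨eT, eT_len, ?_, ?_, ?_⟩
  · intro q q' h
    rw [(eT_len q').1, (eT_len q).1] at h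
    rw [h]
  · intro m p u
    set r : ℕ := enc u with hr
    set Q : ℕ := pr m (pr p r) with hQ
    have hs : snd0 Q = pr p r := snd0_pr m (pr p r)
    have haQ : aOf Q = p := by rw [aOf, hs, fst0_pr]
    have huQ : uOf Q = u := by rw [uOf, hs, snd0_pr, dec_enc]
    have hpu : p + u.length ≤ Q := by
      have h1 : p + r ≤ pr p r := self_le_pr_left p r
      have h2 : pr p r ≤ Q := by
        have := self_le_pr_left m (pr p r); omega
      have h3 : u.length ≤ r := length_le_enc u
      omega
    refine ⟨List.replicate (Q - p - u.length) false, Q + 1, ?_, ?_⟩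
    · rw [eT, haQ, wOf, haQ, huQ]
    · have hlen : ((eT p).2 ++ true :: (u ++ List.replicate (Q - p - u.length) false)).length
          = Q + 1 := by
        simp only [List.length_append, List.length_cons, (eT_len p).2,
          List.length_replicate]
        omega
      rw [hlen]
      simp only [Nat.add_sub_cancel, hQ, fst0_pr]
  · intro n hn
    obtain ⟨q, rfl⟩ : ∃ q, n = q + 1 := ⟨n - 1, by omega⟩
    exact ⟨aOf q, Nat.lt_succ_of_le (aOf_le q), wOf q, by rw [eT], by rw [eT]⟩
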